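/- arXiv:math/0102106 — 3 statements merged into one kernel-verified Lean document; each statement's English description precedes it below -/
import Mathlib

section
/- Jacobi's identity: the sum over l ≥ 0 of (-1)^l (2l+1) q^{l(l+1)/2} equals the cube of the infinite product (q;q)_∞ = ∏_{n≥1}(1-q^n), as formal power series in q. -/
namespace JacobiProofAux

open Finset Polynomial

noncomputable section

abbrev A : Type := Polynomial ℤ

/-- `(q;q)_m` -/
def pch (m : ℕ) : A := ∏ j ∈ Finset.range m, (1 - (X : A) ^ (j + 1))

/-- `∏_{j<m} (1 + q^j w)` in `A[w]`. -/
def Phi (m : ℕ) : Polynomial A :=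
  ∏ j ∈ Finset.range m, (Polynomial.C ((X : A) ^ j) * Polynomial.X + 1)

/-- `q^{k(k-1)/2}` times the Gaussian binomial `[m; k]_q`. -/
def c (m k : ℕ) : A := (Phi m).coeff k

lemma Phi_succ (m : ℕ) : Phi (m + 1) = Phi m * (Polynomial.C ((X : A) ^ m) * Polynomial.X + 1) :=
  Finset.prod_range_succ _ m

lemma c_zero_zero : c 0 0 = 1 := by simp [c, Phi]

lemma c_succ (m k : ℕ) : c (m + 1) (k + 1) = c m (k + 1) + (X : A) ^ m * c m k := by
  have h : Phi m * (Polynomial.C ((X : A) ^ m) * Polynomial.X + 1)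
      = Polynomial.C ((X : A) ^ m) * (Phi m * Polynomial.X) + Phi m := by ring
  rw [c, Phi_succ, h, Polynomial.coeff_add, Polynomial.coeff_C_mul, Polynomial.coeff_mul_X]
  rw [c, c]; ring

lemma c_zero (m : ℕ) : c m 0 = 1 := by
  induction m with
  | zero => exact c_zero_zero
  | succ m ih =>
      have h : Phi m * (Polynomial.C ((X : A) ^ m) * Polynomial.X + 1)
          = Polynomial.C ((X : A) ^ m) * (Phi m * Polynomial.X) + Phi m := by ring
      rw [c, Phi_succ, h]
      simpa [c, Polynomial.coeff_mul_X] using ih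

lemma c_gt (m k : ℕ) (h : m < k) : c m k = 0 := by
  induction m generalizing k with
  | zero =>
      match k, h with
      | k + 1, _ => simp [c, Phi, Polynomial.coeff_one]
  | succ m ih =>
      match k, h with
      | k + 1, h =>
          rw [c_succ, ih (k+1) (by omega), ih k (by omega)]
          ring

lemma pch_succ (m : ℕ) : pch (m + 1) = pch m * (1 - (X : A) ^ (m + 1)) :=
  Finset.prod_range_succ _ m

lemma pch_zero : pch 0 = 1 := by simp [pch]

lemma pch_coeff_zero (m : ℕ) : (pch m).coeff 0 = 1 := by
  induction m with
  | zero => simp [pch]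
  | succ m ih =>
      rw [pch_succ, Polynomial.mul_coeff_zero, ih]
      simp

lemma pch_ne_zero (m : ℕ) : pch m ≠ 0 := fun h => by
  have := pch_coeff_zero m; rw [h] at this; simp at this

lemma X_not_dvd_pch (m : ℕ) : ¬ (X : A) ∣ pch m := by
  rw [Polynomial.X_dvd_iff, pch_coeff_zero]; exact one_ne_zero

/-- exponent helper: e2 k = k(k-1)/2 -/
def e2 (k : ℕ) : ℕ := k * (k - 1) / 2

lemma two_mul_e2 (k : ℕ) : 2 * e2 k = k * (k - 1) := by
  have h : Even (k * (k - 1)) := by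
    rcases Nat.even_or_odd k with h | h
    · exact h.mul_right _
    · rcases k with _ | k
      · simp
      · have hk : Even k := by rcases h with ⟨t, ht⟩; exact ⟨t, by omega⟩
        simpa [Nat.succ_sub_one] using hk.mul_left (k+1)
  have h2 := Nat.even_iff.mp h
  unfold e2
  omega

lemma e2_succ (k : ℕ) : e2 (k + 1) = e2 k + k := by
  have h1 := two_mul_e2 k
  have h2 := two_mul_e2 (k + 1)
  simp only [Nat.add_sub_cancel] at h2
  have h3 : (k + 1) * k = k * (k - 1) + 2 * k := by
    cases k with
    | zero => simp
    | succ s => simp [Nat.succ_sub_one]; ring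
  omega

lemma c_diag (m : ℕ) (h : pch m * pch 0 * c m m = (X : A) ^ e2 m * pch m) :
    c m m = (X : A) ^ e2 m := by
  apply mul_right_cancel₀ (pch_ne_zero m)
  rw [pch_zero] at h
  linear_combination h

/-- q-binomial theorem, divisibility-free form:
`(q;q)_k (q;q)_{m-k} c(m,k) = q^{k(k-1)/2} (q;q)_m`. -/
lemma qBT : ∀ m k, k ≤ m → pch k * pch (m - k) * c m k = (X : A) ^ e2 k * pch m := by
  intro m
  induction m with
  | zero =>
      intro k hk
      interval_cases k
      simp [c_zero, e2, pch]
  | succ m ih =>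
      intro k hk
      match k with
      | 0 => simp [c_zero, e2, pch_zero]
      | j + 1 =>
        rcases Nat.lt_or_ge j m with hkm | hkm
        · -- j + 1 ≤ m
          obtain ⟨a, rfl⟩ : ∃ a, m = j + 1 + a := ⟨m - (j+1), by omega⟩
          have h1 : j + 1 + a + 1 - (j + 1) = a + 1 := by omega
          have h2 : j + 1 + a - (j + 1) = a := by omega
          have I1 := ih (j+1) (by omega)
          have I2 := ih j (by omega)
          rw [h2] at I1
          rw [show j + 1 + a - j = a + 1 from by omega] at I2
          rw [h1, c_succ, pch_succ a, pch_succ (j + 1 + a), pch_succ j, e2_succ]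
          rw [pch_succ j, e2_succ] at I1
          rw [pch_succ a] at I2
          linear_combination (1 - (X:A)^(a+1)) * I1
            + ((X:A)^(j+1+a) * (1 - (X:A)^(j+1))) * I2
        · -- top case j = m
          obtain rfl : j = m := by omega
          have hcm : c j j = (X : A) ^ e2 j := by
            apply c_diag
            have := ih j le_rfl
            rwa [Nat.sub_self] at this
          rw [Nat.sub_self, c_succ, c_gt j (j+1) (by omega), hcm, pch_zero, e2_succ]
          ring


/-- two-variable q-binomial expansion -/
lemma expand (a b : A) : ∀ m, ∏ j ∈ range m,
      (Polynomial.C a + Polynomial.C (b * (X:A)^j) * Polynomial.X)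
    = ∑ k ∈ range (m+1), Polynomial.C (a^(m-k) * b^k * c m k) * Polynomial.X ^ k := by
  intro m
  induction m with
  | zero => simp [c_zero_zero]
  | succ m ih =>
      rw [Finset.prod_range_succ, ih, mul_add]
      -- LHS = Σ * C a + Σ * (C (b q^m) X)
      have hB : (∑ k ∈ range (m+1), Polynomial.C (a^(m-k) * b^k * c m k) * Polynomial.X ^ k)
            * (Polynomial.C (b * (X:A)^m) * Polynomial.X)
          = ∑ k ∈ range (m+1),
              Polynomial.C (a^(m-k) * b^(k+1) * ((X:A)^m * c m k)) * Polynomial.X ^ (k+1) := by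
        rw [Finset.sum_mul]
        refine Finset.sum_congr rfl fun k _ => ?_
        simp only [Polynomial.C_mul, Polynomial.C_pow, pow_succ]
        ring
      have hA : (∑ k ∈ range (m+1), Polynomial.C (a^(m-k) * b^k * c m k) * Polynomial.X ^ k)
            * Polynomial.C a
          = ∑ k ∈ range (m+1), Polynomial.C (a^(m+1-k) * b^k * c m k) * Polynomial.X ^ k := by
        rw [Finset.sum_mul]
        refine Finset.sum_congr rfl fun k hk => ?_
        have h1 : m + 1 - k = (m - k) + 1 := by
          have := Finset.mem_range.mp hk; omega
        rw [h1]
        simp only [Polynomial.C_mul, Polynomial.C_pow, pow_succ]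
        ring
      rw [hA, hB]
      -- now compute the target sum
      rw [Finset.sum_range_succ'
        (fun k => Polynomial.C (a^(m+1-k) * b^k * c (m+1) k) * Polynomial.X ^ k) (m+1)]
      simp only [Nat.succ_sub_succ]
      have hsplit : ∀ k ∈ range (m+1),
          Polynomial.C (a^(m-k) * b^(k+1) * c (m+1) (k+1)) * Polynomial.X ^ (k+1)
          = Polynomial.C (a^(m-k) * b^(k+1) * c m (k+1)) * Polynomial.X ^ (k+1)
            + Polynomial.C (a^(m-k) * b^(k+1) * ((X:A)^m * c m k)) * Polynomial.X ^ (k+1) := by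
        intro k _
        simp only [c_succ, Polynomial.C_mul, Polynomial.C_add, Polynomial.C_pow]
        ring
      rw [Finset.sum_congr rfl hsplit, Finset.sum_add_distrib]
      -- remains: ΣA' + Ca^{m+1} = ΣA + ΣB + Ca^{m+1}-term matching
      have hA' : ∑ k ∈ range (m+1),
            Polynomial.C (a^(m+1-k) * b^k * c m k) * Polynomial.X ^ k
          = (∑ k ∈ range (m+1),
              Polynomial.C (a^(m-k) * b^(k+1) * c m (k+1)) * Polynomial.X ^ (k+1))
            + Polynomial.C (a^(m+1) * b^0 * c m 0) * Polynomial.X ^ 0 := by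
        have hdrop : ∑ k ∈ range (m+1),
              Polynomial.C (a^(m-k) * b^(k+1) * c m (k+1)) * Polynomial.X ^ (k+1)
            = ∑ k ∈ range m,
              Polynomial.C (a^(m-k) * b^(k+1) * c m (k+1)) * Polynomial.X ^ (k+1) := by
          rw [Finset.sum_range_succ, c_gt m (m+1) (by omega)]
          simp
        rw [hdrop, Finset.sum_range_succ'
          (fun k => Polynomial.C (a^(m+1-k) * b^k * c m k) * Polynomial.X ^ k) m]
        simp only [Nat.succ_sub_succ, Nat.sub_zero]
      rw [hA']
      simp only [c_zero, pow_zero, mul_one, one_mul, Nat.sub_zero]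
      ring

lemma sum_range_id_e2 (n : ℕ) : ∑ j ∈ range n, j = e2 n := by
  induction n with
  | zero => simp [e2]
  | succ n ih => rw [Finset.sum_range_succ, ih, e2_succ]

/-- the Laurent-cleared product `L_n` -/
def L (n : ℕ) : Polynomial A :=
  (∏ j ∈ range n, (Polynomial.X - Polynomial.C ((X:A)^j)))
    * ∏ j ∈ range n, (1 - Polynomial.C ((X:A)^(j+1)) * Polynomial.X)

/-- splitting the 2n-fold product -/
lemma psi_split (n : ℕ) (hn : 1 ≤ n) :
    ∏ j ∈ range (2*n),
        (Polynomial.C ((X:A)^(n-1)) + Polynomial.C ((-1) * (X:A)^j) * Polynomial.X)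
      = Polynomial.C ((-1)^n * (X:A)^(e2 n + (n-1)*n)) * L n := by
  have h2n : 2*n = n + n := by ring
  rw [h2n, Finset.prod_range_add]
  have hfirst : ∏ j ∈ range n,
      (Polynomial.C ((X:A)^(n-1)) + Polynomial.C ((-1) * (X:A)^j) * Polynomial.X)
      = Polynomial.C ((-1)^n * (X:A)^(e2 n)) * ∏ j ∈ range n, (Polynomial.X - Polynomial.C ((X:A)^j)) := by
    have step : ∀ j ∈ range n,
        Polynomial.C ((X:A)^(n-1)) + Polynomial.C ((-1) * (X:A)^j) * Polynomial.X
        = Polynomial.C ((-1) * (X:A)^j) * (Polynomial.X - Polynomial.C ((X:A)^(n-1-j))) := by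
      intro j hj
      have hj' := Finset.mem_range.mp hj
      have hC : Polynomial.C ((X:A)^j) * Polynomial.C ((X:A)^(n-1-j))
          = Polynomial.C ((X:A)^(n-1)) := by
        rw [← Polynomial.C_mul, ← pow_add]; congr 2; omega
      simp only [Polynomial.C_mul, Polynomial.C_neg, Polynomial.C_1]
      linear_combination -hC
    rw [Finset.prod_congr rfl step, Finset.prod_mul_distrib]
    have h1 : ∏ j ∈ range n, Polynomial.C ((-1 : A) * (X:A)^j)
        = Polynomial.C ((-1)^n * (X:A)^(e2 n)) := by
      rw [← map_prod Polynomial.C (fun j => (-1 : A) * (X:A)^j) (range n)]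
      congr 1
      rw [Finset.prod_mul_distrib, Finset.prod_const, Finset.prod_pow_eq_pow_sum]
      rw [sum_range_id_e2, Finset.card_range]
    have h2 : ∏ j ∈ range n, (Polynomial.X - Polynomial.C ((X:A)^(n-1-j)))
        = ∏ j ∈ range n, (Polynomial.X - Polynomial.C ((X:A)^j)) :=
      Finset.prod_range_reflect (fun j => Polynomial.X - Polynomial.C ((X:A)^j)) n
    rw [h1, h2]
  have hsecond : ∏ j ∈ range n,
      (Polynomial.C ((X:A)^(n-1)) + Polynomial.C ((-1) * (X:A)^(n+j)) * Polynomial.X)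
      = Polynomial.C ((X:A)^((n-1)*n)) * ∏ j ∈ range n, (1 - Polynomial.C ((X:A)^(j+1)) * Polynomial.X) := by
    have step : ∀ j ∈ range n,
        Polynomial.C ((X:A)^(n-1)) + Polynomial.C ((-1) * (X:A)^(n+j)) * Polynomial.X
        = Polynomial.C ((X:A)^(n-1)) * (1 - Polynomial.C ((X:A)^(j+1)) * Polynomial.X) := by
      intro j hj
      have : (X:A)^(n-1) * (X:A)^(j+1) = (X:A)^(n+j) := by
        rw [← pow_add]; congr 1; omega
      simp only [Polynomial.C_mul, Polynomial.C_neg, Polynomial.C_1]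
      rw [mul_sub, mul_one, ← mul_assoc, ← Polynomial.C_mul, this]
      ring
    rw [Finset.prod_congr rfl step, Finset.prod_mul_distrib, Finset.prod_const]
    rw [← Polynomial.C_pow, ← pow_mul, Finset.card_range]
  rw [hfirst, hsecond, L]
  simp only [Polynomial.C_mul, Polynomial.C_pow, Polynomial.C_neg, Polynomial.C_1, pow_add]
  ring

/-- evaluation of the derivative of `L n` at 1 -/
lemma deriv_L (n : ℕ) (hn : 1 ≤ n) :
    Polynomial.eval 1 (Polynomial.derivative (L n)) = pch (n-1) * pch n := by
  obtain ⟨m, rfl⟩ : ∃ m, n = m + 1 := ⟨n - 1, by omega⟩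
  have hL : L (m+1) = (Polynomial.X - 1) *
      ((∏ j ∈ range m, (Polynomial.X - Polynomial.C ((X:A)^(j+1))))
        * ∏ j ∈ range (m+1), (1 - Polynomial.C ((X:A)^(j+1)) * Polynomial.X)) := by
    rw [L, Finset.prod_range_succ'
      (fun j => (Polynomial.X : Polynomial A) - Polynomial.C ((X:A)^j)) m]
    simp only [pow_zero, Polynomial.C_1]
    ring
  rw [hL, Polynomial.derivative_mul, Polynomial.eval_add, Polynomial.eval_mul,
    Polynomial.eval_mul]
  simp only [Polynomial.derivative_sub, Polynomial.derivative_X, Polynomial.derivative_one,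
    sub_zero, Polynomial.eval_one, Polynomial.eval_sub, Polynomial.eval_X, sub_self,
    zero_mul, one_mul, add_zero, mul_zero]
  simp [pch, Polynomial.eval_prod]

/-- the master identity -/
lemma master (n : ℕ) (hn : 1 ≤ n) :
    (-1 : A)^n * (X:A)^(e2 n + (n-1)*n) * (pch (n-1) * pch n)
      = ∑ k ∈ range (2*n+1), (k : A) *
          (((X:A)^(n-1))^(2*n-k) * (-1)^k * c (2*n) k) := by
  have key := (psi_split n hn).symm.trans (expand ((X:A)^(n-1)) (-1) (2*n))
  have := congrArg (fun p => Polynomial.eval 1 (Polynomial.derivative p)) key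
  rw [Polynomial.derivative_C_mul] at this
  rw [Polynomial.eval_mul, Polynomial.eval_C] at this
  rw [deriv_L n hn] at this
  rw [this]
  rw [map_sum Polynomial.derivative]
  rw [Polynomial.eval_finset_sum]
  refine Finset.sum_congr rfl fun k hk => ?_
  rw [Polynomial.derivative_C_mul, Polynomial.derivative_X_pow]
  rw [Polynomial.eval_mul, Polynomial.eval_C, Polynomial.eval_mul, Polynomial.eval_C,
    Polynomial.eval_pow, Polynomial.eval_X, one_pow, mul_one]
  ring


/-! ### basic e2 facts -/

lemma e2_ge_self (j : ℕ) : j ≤ e2 (j + 1) := by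
  have h := two_mul_e2 (j + 1)
  simp only [Nat.add_sub_cancel] at h
  have h2 : 2 * j ≤ (j + 1) * j := by nlinarith
  linarith

lemma e2_ge_pred (t : ℕ) : t - 1 ≤ e2 t := by
  rcases Nat.lt_or_ge t 2 with h | h
  · have ht : t - 1 = 0 := by omega
    simp [ht]
  · have h1 := two_mul_e2 t
    have h2 : 2 * (t - 1) ≤ t * (t - 1) := Nat.mul_le_mul_right _ h
    linarith

/-! ### congruences mod X^M -/

lemma pch_congr (R : ℕ) : ∀ {m : ℕ}, R ≤ m → (X:A)^R ∣ pch m - pch R := by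
  intro m
  induction m with
  | zero => intro h; interval_cases R; simp
  | succ m ih =>
      intro h
      rcases Nat.lt_or_ge R (m+1) with h1 | h1
      · have hd := ih (by omega)
        rw [pch_succ]
        have : pch m * (1 - (X:A)^(m+1)) - pch R
            = (pch m - pch R) - pch m * (X:A)^(m+1) := by ring
        rw [this]
        exact dvd_sub hd (Dvd.dvd.mul_left (pow_dvd_pow _ (by omega)) _)
      · have : R = m + 1 := by omega
        subst this; simp

lemma cancel_u {M : ℕ} {a u : A} (hu : ¬ (X:A) ∣ u) (h : (X:A)^M ∣ a * u) :
    (X:A)^M ∣ a :=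
  (Polynomial.prime_X).pow_dvd_of_dvd_mul_right M hu h

lemma X_not_dvd_pch_mul (a b : ℕ) : ¬ (X:A) ∣ pch a * pch b := by
  rw [Polynomial.X_dvd_iff, Polynomial.mul_coeff_zero, pch_coeff_zero, pch_coeff_zero]
  norm_num

/-! ### tau and the exponent identity -/

def tau (n k : ℕ) : ℕ := if n ≤ k then e2 (k - n + 1) else e2 (n - k)

lemma exp_id (n k : ℕ) (hn : 1 ≤ n) (hk : k ≤ 2*n) :
    e2 k + (n-1)*(2*n-k) = 3 * e2 n + tau n k := by
  rcases le_or_gt n k with h | h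
  · rw [tau, if_pos h]
    have key : k*(k-1) + 2*((n-1)*(2*n-k)) = 3*(n*(n-1)) + (k-n+1)*(k-n+1-1) := by
      simp only [Nat.add_sub_cancel]
      zify [h, hk, hn, show 1 ≤ k by omega]
      ring
    have h1 := two_mul_e2 k
    have h2 := two_mul_e2 n
    have h3 := two_mul_e2 (k - n + 1)
    linarith
  · rw [tau, if_neg (by omega)]
    have key : k*(k-1) + 2*((n-1)*(2*n-k)) = 3*(n*(n-1)) + (n-k)*(n-k-1) := by
      rcases Nat.eq_zero_or_pos k with rfl | hk1
      · simp only [Nat.mul_zero, Nat.zero_mul, Nat.sub_zero, Nat.zero_add]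
        zify [hn]
        ring
      · zify [le_of_lt h, hk, hn, hk1, show k ≤ n - 1 by omega, show 1 ≤ n - k by omega]
        ring
    have h1 := two_mul_e2 k
    have h2 := two_mul_e2 n
    have h3 := two_mul_e2 (n - k)
    linarith



/-- per-term congruence -/
lemma hterm (N : ℕ) (k : ℕ) (hk : k ≤ 2*(2*N+2)) :
    (X:A)^(3*e2 (2*N+2) + (N+1)) ∣
      (X:A)^(((2*N+2)-1)*(2*(2*N+2)-k)) * c (2*(2*N+2)) k * (pch (N+1))^2
        - (X:A)^(3*e2 (2*N+2) + tau (2*N+2) k) * pch (N+1) := by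
  set n := 2*N+2 with hn
  set E := pch (N+1) with hE
  have hqbt := qBT (2*n) k hk
  have hexp : e2 k + (n-1)*(2*n-k) = 3 * e2 n + tau n k := exp_id n k (by omega) hk
  -- the exact multiplied identity
  have hexact : (X:A)^((n-1)*(2*n-k)) * c (2*n) k * (pch k * pch (2*n - k))
      = (X:A)^(3*e2 n + tau n k) * pch (2*n) := by
    calc (X:A)^((n-1)*(2*n-k)) * c (2*n) k * (pch k * pch (2*n - k))
        = (X:A)^((n-1)*(2*n-k)) * (pch k * pch (2*n - k) * c (2*n) k) := by ring
      _ = (X:A)^((n-1)*(2*n-k)) * ((X:A)^(e2 k) * pch (2*n)) := by rw [hqbt]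
      _ = (X:A)^(e2 k + (n-1)*(2*n-k)) * pch (2*n) := by rw [pow_add]; ring
      _ = (X:A)^(3*e2 n + tau n k) * pch (2*n) := by rw [hexp]
  rcases le_or_gt (tau n k) N with htau | htau
  · -- middle range
    have hklb : N + 1 ≤ k := by
      rcases le_or_gt n k with h | h
      · omega
      · have := e2_ge_pred (n - k)
        rw [tau, if_neg (by omega)] at htau
        omega
    have hklb2 : N + 1 ≤ 2*n - k := by
      rcases le_or_gt n k with h | h
      · have := e2_ge_self (k - n)
        rw [tau, if_pos h] at htau
        omega
      · omega
    have c1 : (X:A)^(N+1) ∣ pch k - E := pch_congr (N+1) hklb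
    have c2 : (X:A)^(N+1) ∣ pch (2*n - k) - E := pch_congr (N+1) hklb2
    have c3 : (X:A)^(N+1) ∣ pch (2*n) - E := pch_congr (N+1) (by omega)
    have cmid : (X:A)^(N+1) ∣ E^2 * pch (2*n) - E * (pch k * pch (2*n - k)) := by
      have : E^2 * pch (2*n) - E * (pch k * pch (2*n - k))
          = E^2 * (pch (2*n) - E) - E * (pch k * (pch (2*n - k) - E))
            - E * E * (pch k - E) := by ring
      rw [this]
      exact dvd_sub (dvd_sub (Dvd.dvd.mul_left c3 _) (Dvd.dvd.mul_left (Dvd.dvd.mul_left c2 _) _))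
        (Dvd.dvd.mul_left c1 _)
    -- multiply by u and cancel
    apply cancel_u (u := pch k * pch (2*n - k)) (X_not_dvd_pch_mul _ _)
    have key : ((X:A)^((n-1)*(2*n-k)) * c (2*n) k * E^2
        - (X:A)^(3*e2 n + tau n k) * E) * (pch k * pch (2*n - k))
        = (X:A)^(3*e2 n + tau n k) * (E^2 * pch (2*n) - E * (pch k * pch (2*n - k))) := by
      calc ((X:A)^((n-1)*(2*n-k)) * c (2*n) k * E^2
          - (X:A)^(3*e2 n + tau n k) * E) * (pch k * pch (2*n - k))
          = E^2 * ((X:A)^((n-1)*(2*n-k)) * c (2*n) k * (pch k * pch (2*n - k)))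
            - (X:A)^(3*e2 n + tau n k) * E * (pch k * pch (2*n - k)) := by ring
        _ = E^2 * ((X:A)^(3*e2 n + tau n k) * pch (2*n))
            - (X:A)^(3*e2 n + tau n k) * E * (pch k * pch (2*n - k)) := by rw [hexact]
        _ = (X:A)^(3*e2 n + tau n k) * (E^2 * pch (2*n) - E * (pch k * pch (2*n - k))) := by
            ring
    rw [key]
    obtain ⟨w, hw⟩ := cmid
    rw [hw]
    have : (X:A)^(3*e2 n + tau n k) * ((X:A)^(N+1) * w)
        = ((X:A)^(3*e2 n + (N+1)) * ((X:A)^(tau n k) * w)) := by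
      rw [pow_add, pow_add]; ring
    rw [this]
    exact Dvd.intro _ rfl
  · -- extreme range : tau ≥ N+1
    have piece2 : (X:A)^(3*e2 n + (N+1)) ∣ (X:A)^(3*e2 n + tau n k) * E :=
      Dvd.dvd.mul_right (pow_dvd_pow _ (by omega)) _
    have piece1 : (X:A)^(3*e2 n + (N+1)) ∣ (X:A)^((n-1)*(2*n-k)) * c (2*n) k * E^2 := by
      have h1 : (X:A)^(3*e2 n + (N+1)) ∣
          ((X:A)^((n-1)*(2*n-k)) * c (2*n) k) * (pch k * pch (2*n - k)) := by
        rw [mul_assoc] at hexact ⊢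
        rw [hexact]
        exact Dvd.dvd.mul_right (pow_dvd_pow _ (by omega)) _
      have h2 := cancel_u (X_not_dvd_pch_mul k (2*n - k)) h1
      exact Dvd.dvd.mul_right h2 _
    exact dvd_sub piece1 piece2



lemma neg_one_pow_mod (a b : ℕ) (h : a % 2 = b % 2) : ((-1:A))^a = (-1)^b := by
  conv_lhs => rw [← Nat.div_add_mod a 2]
  conv_rhs => rw [← Nat.div_add_mod b 2]
  rw [pow_add, pow_add, pow_mul, pow_mul, h]
  norm_num

lemma e2_eq_tri (l : ℕ) : e2 (l + 1) = l * (l + 1) / 2 := by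
  have h1 := two_mul_e2 (l + 1)
  simp only [Nat.add_sub_cancel] at h1
  have h2 : (l + 1) * l = l * (l + 1) := Nat.mul_comm _ _
  omega

/-- the reindexing of the central sum -/
lemma reindex (N : ℕ) :
    (X:A)^(N+1) ∣
      (∑ k ∈ range (2*(2*N+2)+1), (k:A) * ((-1)^k * (X:A)^(tau (2*N+2) k)))
        - ∑ l ∈ range (N+1), Polynomial.C ((-1:ℤ)^l * (2*l+1)) * (X:A)^(l*(l+1)/2) := by
  set n := 2*N+2 with hn
  have hsplit : ∑ k ∈ range (2*n+1), (k:A) * ((-1)^k * (X:A)^(tau n k))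
      = (∑ k ∈ range n, (k:A) * ((-1)^k * (X:A)^(tau n k)))
        + ∑ i ∈ range (n+1), ((n+i : ℕ):A) * ((-1)^(n+i) * (X:A)^(tau n (n+i))) := by
    rw [show 2*n+1 = n + (n+1) by ring, Finset.sum_range_add]
  rw [hsplit]
  -- part B : k = n + i
  have hB : ∀ i ∈ range (n+1),
      ((n+i : ℕ):A) * ((-1)^(n+i) * (X:A)^(tau n (n+i)))
      = ((n+i : ℕ):A) * ((-1)^(n+i) * (X:A)^(e2 (i+1))) := by
    intro i hi
    rw [tau, if_pos (by omega), show n + i - n + 1 = i + 1 by omega]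
  have hBsum : ∑ i ∈ range (n+1), ((n+i : ℕ):A) * ((-1)^(n+i) * (X:A)^(tau n (n+i)))
      = (∑ i ∈ range n, ((n+i : ℕ):A) * ((-1)^(n+i) * (X:A)^(e2 (i+1))))
        + ((n+n : ℕ):A) * ((-1)^(n+n) * (X:A)^(e2 (n+1))) := by
    rw [Finset.sum_congr rfl hB, Finset.sum_range_succ]
  rw [hBsum]
  -- part A : reflect
  have hA : ∑ k ∈ range n, (k:A) * ((-1)^k * (X:A)^(tau n k))
      = ∑ j ∈ range n, ((n-1-j : ℕ):A) * ((-1)^(n-1-j) * (X:A)^(e2 (j+1))) := by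
    rw [← Finset.sum_range_reflect]
    refine Finset.sum_congr rfl fun j hj => ?_
    have hj' := Finset.mem_range.mp hj
    rw [tau, if_neg (by omega), show n - (n-1-j) = j + 1 by omega]
  rw [hA]
  rw [show (∑ j ∈ range n, ((n-1-j : ℕ):A) * ((-1)^(n-1-j) * (X:A)^(e2 (j+1))))
        + ((∑ i ∈ range n, ((n+i : ℕ):A) * ((-1)^(n+i) * (X:A)^(e2 (i+1))))
          + ((n+n : ℕ):A) * ((-1)^(n+n) * (X:A)^(e2 (n+1))))
      = ((∑ j ∈ range n, (((n-1-j : ℕ):A) * ((-1)^(n-1-j) * (X:A)^(e2 (j+1)))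
            + ((n+j : ℕ):A) * ((-1)^(n+j) * (X:A)^(e2 (j+1))))))
        + ((n+n : ℕ):A) * ((-1)^(n+n) * (X:A)^(e2 (n+1)))
    from by rw [Finset.sum_add_distrib]; ring]
  -- merge the two sums
  have hmerge : ∀ j ∈ range n,
      ((n-1-j : ℕ):A) * ((-1)^(n-1-j) * (X:A)^(e2 (j+1)))
        + ((n+j : ℕ):A) * ((-1)^(n+j) * (X:A)^(e2 (j+1)))
      = ((-1:A))^j * (2*(j:A)+1) * (X:A)^(e2 (j+1)) := by
    intro j hj
    have hj' := Finset.mem_range.mp hj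
    have hs1 : ((-1:A))^(n-1-j) = (-1)^(j+1) := neg_one_pow_mod _ _ (by omega)
    have hs2 : ((-1:A))^(n+j) = (-1)^j := neg_one_pow_mod _ _ (by omega)
    rw [hs1, hs2]
    have hc : ((n-1-j : ℕ):A) = (n:A) - 1 - (j:A) := by
      push_cast [show n - 1 - j = n - (1 + j) by omega,
        Nat.cast_sub (by omega : 1 + j ≤ n)]
      ring
    rw [hc]
    push_cast
    ring
  rw [Finset.sum_congr rfl hmerge]
  -- split range n at N+1 and compare with target
  have hsplit2 : ∑ j ∈ range n, ((-1:A))^j * (2*(j:A)+1) * (X:A)^(e2 (j+1))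
      = (∑ j ∈ range (N+1), ((-1:A))^j * (2*(j:A)+1) * (X:A)^(e2 (j+1)))
        + ∑ i ∈ range (N+1), ((-1:A))^(N+1+i) * (2*((N+1+i : ℕ):A)+1) * (X:A)^(e2 (N+1+i+1)) := by
    rw [show n = (N+1) + (N+1) by omega, Finset.sum_range_add]
  rw [hsplit2]
  have htarget : ∀ l ∈ range (N+1),
      Polynomial.C ((-1:ℤ)^l * (2*l+1)) * (X:A)^(l*(l+1)/2)
      = ((-1:A))^l * (2*(l:A)+1) * (X:A)^(e2 (l+1)) := by
    intro l hl
    rw [← e2_eq_tri]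
    simp only [Polynomial.C_mul, Polynomial.C_pow, Polynomial.C_add, Polynomial.C_neg,
      Polynomial.C_1, Polynomial.C_eq_natCast, map_ofNat]
  rw [Finset.sum_congr rfl htarget]
  -- now the difference is the junk terms
  have hjunk : ∀ (i : ℕ), (X:A)^(N+1) ∣ (X:A)^(e2 (N+1+i+1)) := by
    intro i
    exact pow_dvd_pow _ (by have := e2_ge_self (N+1+i); omega)
  have hjunk2 : (X:A)^(N+1) ∣ (X:A)^(e2 (n+1)) := by
    exact pow_dvd_pow _ (by have := e2_ge_self n; omega)
  have final : (∑ j ∈ range (N+1), ((-1:A))^j * (2*(j:A)+1) * (X:A)^(e2 (j+1)))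
        + (∑ i ∈ range (N+1), ((-1:A))^(N+1+i) * (2*((N+1+i : ℕ):A)+1) * (X:A)^(e2 (N+1+i+1)))
        + ((n+n : ℕ):A) * ((-1)^(n+n) * (X:A)^(e2 (n+1)))
        - ∑ l ∈ range (N+1), ((-1:A))^l * (2*(l:A)+1) * (X:A)^(e2 (l+1))
      = (∑ i ∈ range (N+1), ((-1:A))^(N+1+i) * (2*((N+1+i : ℕ):A)+1) * (X:A)^(e2 (N+1+i+1)))
        + ((n+n : ℕ):A) * ((-1)^(n+n) * (X:A)^(e2 (n+1))) := by
    ring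
  rw [final]
  refine dvd_add (Finset.dvd_sum fun i _ => Dvd.dvd.mul_left (hjunk i) _) ?_
  exact Dvd.dvd.mul_left (Dvd.dvd.mul_left hjunk2 _) _



/-- main congruence: `E^3 ≡ ∑ (-1)^l (2l+1) q^{T_l}  mod q^{N+1}` -/
lemma keyCongr (N : ℕ) :
    (X:A)^(N+1) ∣ (pch (N+1))^3
      - ∑ l ∈ range (N+1), Polynomial.C ((-1:ℤ)^l * (2*l+1)) * (X:A)^(l*(l+1)/2) := by
  set n := 2*N+2 with hn
  set E := pch (N+1) with hE
  set T : A := ∑ l ∈ range (N+1), Polynomial.C ((-1:ℤ)^l * (2*l+1)) * (X:A)^(l*(l+1)/2)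
    with hT
  set W : A := ∑ k ∈ range (2*n+1), (k:A) *
      (((X:A)^(n-1))^(2*n-k) * (-1)^k * c (2*n) k) with hW
  set S : A := ∑ k ∈ range (2*n+1), (k:A) * ((-1)^k * (X:A)^(tau n k)) with hS
  -- master identity with sign and exponent cleaned
  have hmaster : (X:A)^(3*e2 n) * (pch (n-1) * pch n) = W := by
    have h := master n (by omega)
    have hsign : ((-1:A))^n = 1 := by
      have : Even n := ⟨N+1, by omega⟩
      exact this.neg_one_pow
    have hexp : e2 n + (n-1)*n = 3 * e2 n := by
      have h1 := two_mul_e2 n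
      have h2 : (n-1)*n = n*(n-1) := Nat.mul_comm _ _
      linarith
    rw [hsign, hexp, one_mul] at h
    exact h
  -- D1 : termwise congruence summed
  have D1 : (X:A)^(3*e2 n + (N+1)) ∣ W * E^2 - (X:A)^(3*e2 n) * E * S := by
    have heq : W * E^2 - (X:A)^(3*e2 n) * E * S
        = ∑ k ∈ range (2*n+1), ((k:A) * (-1)^k) *
            ((X:A)^((n-1)*(2*n-k)) * c (2*n) k * E^2
              - (X:A)^(3*e2 n + tau n k) * E) := by
      rw [hW, hS, Finset.sum_mul, Finset.mul_sum, ← Finset.sum_sub_distrib]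
      refine Finset.sum_congr rfl fun k hk => ?_
      rw [← pow_mul, pow_add]
      ring
    rw [heq]
    refine Finset.dvd_sum fun k hk => ?_
    exact Dvd.dvd.mul_left (hterm N k (by have := Finset.mem_range.mp hk; omega)) _
  -- D2 : replace pch(n-1) pch n E² by E⁴
  have D2 : (X:A)^(3*e2 n + (N+1)) ∣ W * E^2 - (X:A)^(3*e2 n) * E^4 := by
    rw [← hmaster]
    have c1 : (X:A)^(N+1) ∣ pch (n-1) - E := pch_congr (N+1) (by omega)
    have c2 : (X:A)^(N+1) ∣ pch n - E := pch_congr (N+1) (by omega)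
    have inner : (X:A)^(N+1) ∣ pch (n-1) * pch n * E^2 - E^4 := by
      have hring : pch (n-1) * pch n * E^2 - E^4
          = (pch (n-1) - E) * (pch n * E^2) + (pch n - E) * (E^3) := by ring
      rw [hring]
      exact dvd_add (Dvd.dvd.mul_right c1 _) (Dvd.dvd.mul_right c2 _)
    obtain ⟨w, hw⟩ := inner
    have : (X:A)^(3*e2 n) * (pch (n-1) * pch n) * E^2 - (X:A)^(3*e2 n) * E^4
        = (X:A)^(3*e2 n) * (pch (n-1) * pch n * E^2 - E^4) := by ring
    rw [this, hw, pow_add]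
    exact ⟨w, by ring⟩
  -- D3 : reindex
  have D3 : (X:A)^(3*e2 n + (N+1)) ∣ (X:A)^(3*e2 n) * E * (S - T) := by
    obtain ⟨w, hw⟩ := reindex N
    rw [show S - T = (X:A)^(N+1) * w from hw, pow_add]
    exact ⟨E * w, by ring⟩
  -- combine
  have comb : (X:A)^(3*e2 n) * ((E^3 - T) * E)
      = ((X:A)^(3*e2 n) * E * (S - T)) - (W * E^2 - (X:A)^(3*e2 n) * E^4)
        + (W * E^2 - (X:A)^(3*e2 n) * E * S) := by ring
  have hdvd : (X:A)^(3*e2 n + (N+1)) ∣ (X:A)^(3*e2 n) * ((E^3 - T) * E) := by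
    rw [comb]
    exact dvd_add (dvd_sub D3 D2) D1
  rw [pow_add] at hdvd
  have hcan : (X:A)^(N+1) ∣ (E^3 - T) * E :=
    (mul_dvd_mul_iff_left (pow_ne_zero (3*e2 n) Polynomial.X_ne_zero)).mp hdvd
  exact cancel_u (X_not_dvd_pch (N+1)) hcan


theorem jacobi_identity_aux (N : ℕ) :
    PowerSeries.coeff N
        (∑ l ∈ Finset.range (N + 1),
          (((-1 : ℤ) ^ l * (2 * l + 1)) • (PowerSeries.X : PowerSeries ℤ) ^ (l * (l + 1) / 2))) =
      PowerSeries.coeff N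
        ((∏ n ∈ Finset.range (N + 1), (1 - (PowerSeries.X : PowerSeries ℤ) ^ (n + 1))) ^ 3) := by
  have key := keyCongr N
  -- polynomial coefficient equality
  have hpoly : ((pch (N+1))^3).coeff N
      = (∑ l ∈ range (N+1),
          Polynomial.C ((-1:ℤ)^l * (2*l+1)) * (X:A)^(l*(l+1)/2)).coeff N := by
    obtain ⟨w, hw⟩ := key
    have hE : (pch (N+1))^3
        = (∑ l ∈ range (N+1),
            Polynomial.C ((-1:ℤ)^l * (2*l+1)) * (X:A)^(l*(l+1)/2)) + w * (X:A)^(N+1) := by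
      linear_combination hw
    rw [hE, Polynomial.coeff_add, Polynomial.coeff_mul_X_pow', if_neg (by omega)]
    ring
  -- LHS bridge
  have hL : PowerSeries.coeff N
        (∑ l ∈ Finset.range (N + 1),
          (((-1 : ℤ) ^ l * (2 * l + 1)) • (PowerSeries.X : PowerSeries ℤ) ^ (l * (l + 1) / 2)))
      = (∑ l ∈ range (N+1),
          Polynomial.C ((-1:ℤ)^l * (2*l+1)) * (X:A)^(l*(l+1)/2)).coeff N := by
    rw [map_sum, Polynomial.finset_sum_coeff]
    refine Finset.sum_congr rfl fun l _ => ?_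
    rw [Polynomial.coeff_C_mul, Polynomial.coeff_X_pow]
    rw [map_zsmul, PowerSeries.coeff_X_pow]
    simp [smul_eq_mul]
  -- RHS bridge
  have hprod : ((pch (N+1) : A) : PowerSeries ℤ)
      = ∏ j ∈ range (N+1), (1 - (PowerSeries.X : PowerSeries ℤ)^(j+1)) := by
    rw [pch, ← Polynomial.coeToPowerSeries.ringHom_apply, map_prod]
    refine Finset.prod_congr rfl fun j _ => ?_
    rw [map_sub, map_one, map_pow]
    rw [Polynomial.coeToPowerSeries.ringHom_apply, Polynomial.coe_X]
  have hR : PowerSeries.coeff N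
        ((∏ n ∈ Finset.range (N + 1), (1 - (PowerSeries.X : PowerSeries ℤ) ^ (n + 1))) ^ 3)
      = ((pch (N+1))^3).coeff N := by
    rw [← hprod, ← Polynomial.coe_pow, Polynomial.coeff_coe]
  rw [hL, hR, hpoly]

end
end JacobiProofAux

open Finset PowerSeries

/-- Jacobi's identity `∑_{l≥0} (-1)^l (2l+1) q^{l(l+1)/2} = ((q;q)_∞)^3`, stated
coefficientwise in `ℤ⟦X⟧`: for every `N`, the `N`-th coefficient of the
(truncated) sum equals the `N`-th coefficient of the (truncated) cubed product.
The truncations are exact: terms with `l > N` have `l(l+1)/2 > N`, and factors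
`1 - X^{n+1}` with `n + 1 > N` do not affect coefficients of index `≤ N`. -/
theorem jacobi_identity (N : ℕ) :
    PowerSeries.coeff N
        (∑ l ∈ Finset.range (N + 1),
          (((-1 : ℤ) ^ l * (2 * l + 1)) • (X : PowerSeries ℤ) ^ (l * (l + 1) / 2))) =
      PowerSeries.coeff N
        ((∏ n ∈ Finset.range (N + 1), (1 - (X : PowerSeries ℤ) ^ (n + 1))) ^ 3) := by
  exact JacobiProofAux.jacobi_identity_aux N
end

section
/- The recurrence for p: with p_{i,j,k}(L1,L2,M) = ∑_{s≥0} q^{s(M+2) - T_s + T_{i-s} + T_{j-s} + T_{k-s}} C(L1-s, i-s) C(L2-i, j-s) C(L2-i-j+s, s) C(M-i-j, k-s), one has p_{i,j,k}(L1,L2,M) = p_{i,j,k}(L1, L2-1, M) + q^{L2} p_{i,j-1,k}(L1-1, L2-1, M-1) + q^{L2} p_{i-1,j-1,k}(L1-1, L2-2, M-1), for all integers i, j, k, L1, L2, M. -/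
open Finset

noncomputable def q : RatFunc ℚ := RatFunc.X

/-- Triangular number `T m = m(m+1)/2` (integer division; note `T (-1) = 0`). -/
def T (m : ℤ) : ℤ := m * (m + 1) / 2

/-- The Gaussian binomial coefficient `C(N, n) = (q^{N-n+1};q)_n / (q;q)_n` for
`n ≥ 0`, and `0` when out of range (`n < 0`).  For `0 ≤ N < n` the product
contains the factor `1 - q^0 = 0`, so it vanishes. -/
noncomputable def qbin (N n : ℤ) : RatFunc ℚ :=
  if n < 0 then 0
  else ∏ r ∈ Finset.range n.toNat, (1 - q ^ (N - (r : ℤ))) / (1 - q ^ ((r : ℤ) + 1))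


/-- The single sum `p_{i,j,k}(L1,L2,M)` of Theorem 5; all terms with `s > i`
vanish since `qbin (L1 - s) (i - s) = 0` for `i - s < 0`, so the range below
captures the full sum over `s ≥ 0`. -/
noncomputable def p (i j k L1 L2 M : ℤ) : RatFunc ℚ :=
  ∑ s ∈ Finset.range (i.toNat + 1),
    q ^ ((s : ℤ) * (M + 2) - T s + T (i - s) + T (j - s) + T (k - s)) *
      qbin (L1 - s) (i - s) * qbin (L2 - i) (j - s) * qbin (L2 - i - j + s) s *
      qbin (M - i - j) (k - s)

lemma q_ne_zero : q ≠ 0 := RatFunc.X_ne_zero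

lemma one_sub_q_pow_ne_zero (n : ℤ) (hn : 1 ≤ n) : (1 : RatFunc ℚ) - q ^ n ≠ 0 := by
  intro h
  have h1 : q ^ n = 1 := by linear_combination -h
  lift n to ℕ using (by omega) with m
  rw [zpow_natCast] at h1
  have h2 : (algebraMap (Polynomial ℚ) (RatFunc ℚ)) (Polynomial.X ^ m) = algebraMap _ _ 1 := by
    simp only [map_pow, map_one, RatFunc.algebraMap_X]
    simpa [q] using h1
  have h3 := IsFractionRing.injective (Polynomial ℚ) (RatFunc ℚ) h2
  have h4 : (Polynomial.X ^ m : Polynomial ℚ).natDegree = 0 := by rw [h3]; simp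
  simp [Polynomial.natDegree_X_pow] at h4
  omega

lemma two_T (m : ℤ) : 2 * T m = m * (m + 1) := by
  have h : (2:ℤ) ∣ m * (m + 1) := (Int.even_mul_succ_self m).two_dvd
  exact Int.mul_ediv_cancel' h

lemma T_diff (m : ℤ) : T m = T (m - 1) + m := by
  have h1 := two_T m
  have h2 := two_T (m - 1)
  have h3 : m * (m + 1) = (m - 1) * (m - 1 + 1) + 2 * m := by ring
  linarith

lemma qbin_neg (N n : ℤ) (h : n < 0) : qbin N n = 0 := if_pos h

lemma qbin_zero (N : ℤ) : qbin N 0 = 1 := by simp [qbin]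

lemma qbin_peel_last (N n : ℤ) (hn : 1 ≤ n) :
    qbin N n = (1 - q ^ (N - n + 1)) / (1 - q ^ n) * qbin N (n - 1) := by
  rw [qbin, qbin, if_neg (by omega), if_neg (by omega)]
  have hm : n.toNat = (n - 1).toNat + 1 := by omega
  rw [hm, Finset.prod_range_succ]
  have h1 : ((( n - 1).toNat : ℤ)) = n - 1 := by omega
  rw [h1]
  rw [show N - (n - 1) = N - n + 1 from by ring, show n - 1 + 1 = n from by ring]
  ring

lemma qbin_peel_first (N n : ℤ) (hn : 1 ≤ n) :
    qbin N n = (1 - q ^ N) / (1 - q ^ n) * qbin (N - 1) (n - 1) := by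
  rw [qbin, qbin, if_neg (by omega), if_neg (by omega)]
  have hm : n.toNat = (n - 1).toNat + 1 := by omega
  rw [hm]
  rw [Finset.prod_div_distrib, Finset.prod_div_distrib]
  rw [Finset.prod_range_succ', Finset.prod_range_succ]
  have h1 : ((( n - 1).toNat : ℤ)) = n - 1 := by omega
  rw [h1]
  have h2 : ∀ r ∈ Finset.range (n-1).toNat, (1 - q ^ (N - ((r:ℕ)+1 : ℕ))) = (1 - q ^ (N - 1 - (r:ℤ))) := by
    intro r _
    congr 1
    push_cast
    ring
  rw [Finset.prod_congr rfl h2]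
  rw [show n - 1 + 1 = n from by ring]
  push_cast
  rw [show N - (0:ℤ) = N from by ring]
  field_simp

lemma pascal1 (N n : ℤ) :
    qbin N n = qbin (N - 1) n + q ^ (N - n) * qbin (N - 1) (n - 1) := by
  rcases lt_trichotomy n 0 with h | h | h
  · rw [qbin_neg _ _ h, qbin_neg _ _ h, qbin_neg _ _ (by omega)]; ring
  · subst h
    rw [qbin_zero, qbin_zero, qbin_neg _ _ (by omega)]; ring
  · have hn : 1 ≤ n := h
    rw [qbin_peel_first N n hn]
    have h2 := qbin_peel_last (N - 1) n hn
    rw [show N - 1 - n + 1 = N - n from by ring] at h2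
    rw [h2]
    have hd := one_sub_q_pow_ne_zero n hn
    have hN : q ^ N = q ^ (N - n) * q ^ n := by
      rw [← zpow_add₀ q_ne_zero]; ring_nf
    field_simp
    linear_combination (-(qbin (N-1) (n-1))) * hN

lemma pascal2 (N n : ℤ) :
    qbin N n = q ^ n * qbin (N - 1) n + qbin (N - 1) (n - 1) := by
  rcases lt_trichotomy n 0 with h | h | h
  · rw [qbin_neg _ _ h, qbin_neg _ _ h, qbin_neg _ _ (by omega)]; ring
  · subst h
    rw [qbin_zero, qbin_zero, qbin_neg _ _ (by omega)]; simp
  · have hn : 1 ≤ n := h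
    rw [qbin_peel_first N n hn]
    have h2 := qbin_peel_last (N - 1) n hn
    rw [show N - 1 - n + 1 = N - n from by ring] at h2
    rw [h2]
    have hd := one_sub_q_pow_ne_zero n hn
    have hN : q ^ N = q ^ (N - n) * q ^ n := by
      rw [← zpow_add₀ q_ne_zero]; ring_nf
    field_simp
    linear_combination (-(qbin (N-1) (n-1))) * hN

/-- boundary/correction term -/
noncomputable def Xf (i j k L1 L2 M s : ℤ) : RatFunc ℚ :=
  q ^ (s * (M + 2) - T s + T (i - s) + T (j - s) + T (k - s) + (L2 - i - j)) *
    qbin (L1 - s) (i - s) * qbin (L2 - 1 - i) (j - s) * qbin (L2 - 1 - i - j + s) (s - 1) *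
    qbin (M - i - j) (k - s)

lemma key (i j k L1 L2 M s : ℤ) :
    q ^ (s * (M + 2) - T s + T (i - s) + T (j - s) + T (k - s)) *
        qbin (L1 - s) (i - s) * qbin (L2 - i) (j - s) * qbin (L2 - i - j + s) s *
        qbin (M - i - j) (k - s)
      = (q ^ (s * (M + 2) - T s + T (i - s) + T (j - s) + T (k - s)) *
          qbin (L1 - s) (i - s) * qbin (L2 - 1 - i) (j - s) * qbin (L2 - 1 - i - j + s) s *
          qbin (M - i - j) (k - s)
        + q ^ L2 * (q ^ (s * (M - 1 + 2) - T s + T (i - s) + T (j - 1 - s) + T (k - s)) *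
            qbin (L1 - 1 - s) (i - s) * qbin (L2 - 1 - i) (j - 1 - s) *
            qbin (L2 - 1 - i - (j - 1) + s) s * qbin (M - 1 - i - (j - 1)) (k - s))
        + q ^ L2 * (q ^ (s * (M - 1 + 2) - T s + T (i - 1 - s) + T (j - 1 - s) + T (k - s)) *
            qbin (L1 - 1 - s) (i - 1 - s) * qbin (L2 - 2 - (i - 1)) (j - 1 - s) *
            qbin (L2 - 2 - (i - 1) - (j - 1) + s) s * qbin (M - 1 - (i - 1) - (j - 1)) (k - s)))
        + (Xf i j k L1 L2 M s - Xf i j k L1 L2 M (s + 1)) := by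
  unfold Xf
  -- normalize integer arguments
  rw [show L2 - 2 - (i - 1) = L2 - 1 - i from by ring,
      show L2 - 1 - i - (j - 1) + s = L2 - i - j + s from by ring,
      show M - 1 - (i - 1) - (j - 1) = M - i - j + 1 from by ring,
      show M - 1 - i - (j - 1) = M - i - j from by ring,
      show i - (s + 1) = i - 1 - s from by ring,
      show j - (s + 1) = j - 1 - s from by ring,
      show k - (s + 1) = k - 1 - s from by ring,
      show L1 - (s + 1) = L1 - 1 - s from by ring,
      show L2 - 1 - i - j + (s + 1) = L2 - i - j + s from by ring,
      show s + 1 - 1 = s from by ring]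
  -- Pascal expansions
  have hq := q_ne_zero
  have hP1 : qbin (L1 - s) (i - s)
      = q ^ (i - s) * qbin (L1 - 1 - s) (i - s) + qbin (L1 - 1 - s) (i - 1 - s) := by
    have h := pascal2 (L1 - s) (i - s)
    rw [show L1 - s - 1 = L1 - 1 - s from by ring, show i - s - 1 = i - 1 - s from by ring] at h
    exact h
  have hP2 : qbin (L2 - i) (j - s)
      = qbin (L2 - 1 - i) (j - s) + q ^ (L2 - i - j + s) * qbin (L2 - 1 - i) (j - 1 - s) := by
    have h := pascal1 (L2 - i) (j - s)
    rw [show L2 - i - 1 = L2 - 1 - i from by ring, show j - s - 1 = j - 1 - s from by ring,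
        show L2 - i - (j - s) = L2 - i - j + s from by ring] at h
    exact h
  have hP3 : qbin (L2 - i - j + s) s
      = qbin (L2 - 1 - i - j + s) s + q ^ (L2 - i - j) * qbin (L2 - 1 - i - j + s) (s - 1) := by
    have h := pascal1 (L2 - i - j + s) s
    rw [show L2 - i - j + s - 1 = L2 - 1 - i - j + s from by ring,
        show L2 - i - j + s - s = L2 - i - j from by ring] at h
    exact h
  have hP4 : qbin (M - i - j + 1) (k - s)
      = qbin (M - i - j) (k - s) + q ^ (M + 1 - i - j - k + s) * qbin (M - i - j) (k - 1 - s) := by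
    have h := pascal1 (M - i - j + 1) (k - s)
    rw [show M - i - j + 1 - 1 = M - i - j from by ring,
        show k - s - 1 = k - 1 - s from by ring,
        show M - i - j + 1 - (k - s) = M + 1 - i - j - k + s from by ring] at h
    exact h
  rw [hP1, hP2, hP3, hP4]
  -- power identities
  have hTs := T_diff (s + 1)
  rw [show s + 1 - 1 = s from by ring] at hTs
  have hTi := T_diff (i - s)
  rw [show i - s - 1 = i - 1 - s from by ring] at hTi
  have hTj := T_diff (j - s)
  rw [show j - s - 1 = j - 1 - s from by ring] at hTj
  have hTk := T_diff (k - s)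
  rw [show k - s - 1 = k - 1 - s from by ring] at hTk
  have hb : q ^ L2 * q ^ (s * (M - 1 + 2) - T s + T (i - s) + T (j - 1 - s) + T (k - s))
      = q ^ (s * (M + 2) - T s + T (i - s) + T (j - s) + T (k - s))
        * q ^ (L2 - i - j + s) * q ^ (i - s) := by
    rw [← zpow_add₀ hq, ← zpow_add₀ hq, ← zpow_add₀ hq]
    congr 1
    linear_combination -hTj
  have hc : q ^ L2 * q ^ (s * (M - 1 + 2) - T s + T (i - 1 - s) + T (j - 1 - s) + T (k - s))
      = q ^ (s * (M + 2) - T s + T (i - s) + T (j - s) + T (k - s))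
        * q ^ (L2 - i - j + s) := by
    rw [← zpow_add₀ hq, ← zpow_add₀ hq]
    congr 1
    linear_combination -hTi - hTj
  have hX : q ^ (s * (M + 2) - T s + T (i - s) + T (j - s) + T (k - s) + (L2 - i - j))
      = q ^ (s * (M + 2) - T s + T (i - s) + T (j - s) + T (k - s)) * q ^ (L2 - i - j) :=
    zpow_add₀ hq _ _
  have hX1 : q ^ ((s + 1) * (M + 2) - T (s + 1) + T (i - 1 - s) + T (j - 1 - s) + T (k - 1 - s)
        + (L2 - i - j))
      = q ^ (s * (M + 2) - T s + T (i - s) + T (j - s) + T (k - s))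
        * q ^ (L2 - i - j + s) * q ^ (M + 1 - i - j - k + s) := by
    rw [← zpow_add₀ hq, ← zpow_add₀ hq]
    congr 1
    linear_combination -hTs - hTi - hTj - hTk
  linear_combination
    (-(qbin (L1 - 1 - s) (i - s) * qbin (L2 - 1 - i) (j - 1 - s) *
        (qbin (L2 - 1 - i - j + s) s + q ^ (L2 - i - j) * qbin (L2 - 1 - i - j + s) (s - 1)) *
        qbin (M - i - j) (k - s))) * hb
    + (-(qbin (L1 - 1 - s) (i - 1 - s) * qbin (L2 - 1 - i) (j - 1 - s) *
        (qbin (L2 - 1 - i - j + s) s + q ^ (L2 - i - j) * qbin (L2 - 1 - i - j + s) (s - 1)) *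
        (qbin (M - i - j) (k - s) + q ^ (M + 1 - i - j - k + s) * qbin (M - i - j) (k - 1 - s)))) * hc
    + (-((q ^ (i - s) * qbin (L1 - 1 - s) (i - s) + qbin (L1 - 1 - s) (i - 1 - s)) *
        qbin (L2 - 1 - i) (j - s) * qbin (L2 - 1 - i - j + s) (s - 1) *
        qbin (M - i - j) (k - s))) * hX
    + (qbin (L1 - 1 - s) (i - 1 - s) * qbin (L2 - 1 - i) (j - 1 - s) *
        (qbin (L2 - 1 - i - j + s) s + q ^ (L2 - i - j) * qbin (L2 - 1 - i - j + s) (s - 1)) *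
        qbin (M - i - j) (k - 1 - s)) * hX1


/-- general term of `p` as a function of a natural index -/
noncomputable def f (i j k L1 L2 M : ℤ) (s : ℕ) : RatFunc ℚ :=
  q ^ ((s : ℤ) * (M + 2) - T s + T (i - s) + T (j - s) + T (k - s)) *
    qbin (L1 - s) (i - s) * qbin (L2 - i) (j - s) * qbin (L2 - i - j + s) s *
    qbin (M - i - j) (k - s)

lemma f_vanish (i j k L1 L2 M : ℤ) (s : ℕ) (h : i < (s:ℤ)) : f i j k L1 L2 M s = 0 := by
  unfold f
  rw [qbin_neg (L1 - s) (i - s) (by omega)]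
  ring

lemma p_eq_sum (i j k L1 L2 M : ℤ) (n : ℕ) (hn : i.toNat + 1 ≤ n) :
    p i j k L1 L2 M = ∑ s ∈ Finset.range n, f i j k L1 L2 M s := by
  show (∑ s ∈ Finset.range (i.toNat + 1), f i j k L1 L2 M s) = _
  apply Finset.sum_subset (Finset.range_subset_range.2 hn)
  intro x hx hx2
  apply f_vanish
  simp only [Finset.mem_range] at hx hx2
  omega

/-- The recurrence for `p`. -/
theorem p_recurrence (i j k L1 L2 M : ℤ) :
    p i j k L1 L2 M =
      p i j k L1 (L2 - 1) M + q ^ L2 * p i (j - 1) k (L1 - 1) (L2 - 1) (M - 1) +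
        q ^ L2 * p (i - 1) (j - 1) k (L1 - 1) (L2 - 2) (M - 1) := by
  set n := i.toNat + 2 with hn
  rw [p_eq_sum i j k L1 L2 M n (by omega),
      p_eq_sum i j k L1 (L2 - 1) M n (by omega),
      p_eq_sum i (j - 1) k (L1 - 1) (L2 - 1) (M - 1) n (by omega),
      p_eq_sum (i - 1) (j - 1) k (L1 - 1) (L2 - 2) (M - 1) n (by omega)]
  rw [Finset.mul_sum, Finset.mul_sum, ← Finset.sum_add_distrib, ← Finset.sum_add_distrib]
  have hterm : ∀ s ∈ Finset.range n, f i j k L1 L2 M s =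
      (f i j k L1 (L2 - 1) M s + q ^ L2 * f i (j - 1) k (L1 - 1) (L2 - 1) (M - 1) s +
        q ^ L2 * f (i - 1) (j - 1) k (L1 - 1) (L2 - 2) (M - 1) s) +
      (Xf i j k L1 L2 M s - Xf i j k L1 L2 M ((s:ℤ) + 1)) := by
    intro s _
    have h := key i j k L1 L2 M (s : ℤ)
    unfold f
    exact h
  rw [Finset.sum_congr rfl hterm, Finset.sum_add_distrib]
  have htel : (∑ s ∈ Finset.range n, (Xf i j k L1 L2 M s - Xf i j k L1 L2 M ((s:ℤ) + 1)))
      = Xf i j k L1 L2 M (0:ℕ) - Xf i j k L1 L2 M (n:ℕ) := by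
    have h := Finset.sum_range_sub' (f := fun m : ℕ => Xf i j k L1 L2 M m) n
    simp only [Nat.cast_add, Nat.cast_one] at h
    exact h
  rw [htel]
  have h0 : Xf i j k L1 L2 M (0:ℕ) = 0 := by
    unfold Xf
    rw [qbin_neg (L2 - 1 - i - j + (0:ℕ)) ((0:ℕ) - 1) (by norm_num)]
    ring
  have hN : Xf i j k L1 L2 M (n:ℕ) = 0 := by
    unfold Xf
    rw [qbin_neg (L1 - (n:ℕ)) (i - (n:ℕ)) (by omega)]
    ring
  rw [h0, hN]
  ring
end

section
/- Boundary evaluation of p: with p_{i,j,k}(L1,L2,M) as in Theorem 5, setting L1 = L2 = i+j-1 yields p_{i,j,k}(i+j-1, i+j-1, M) = δ_{i,0} δ_{j,0} q^{T_k} C(M-i-j, k), where δ is the Kronecker delta and C the q-binomial coefficient. -/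
open Finset

lemma qbin_eq_zero {N n : ℤ} (h1 : 0 ≤ N) (h2 : N < n) : qbin N n = 0 := by
  unfold qbin
  rw [if_neg (by omega)]
  apply Finset.prod_eq_zero (i := N.toNat)
  · simp only [Finset.mem_range]; omega
  · have h : (N.toNat : ℤ) = N := Int.toNat_of_nonneg h1
    rw [h]
    simp

/-- Boundary evaluation of `p` at `L1 = L2 = i + j - 1`. -/
theorem p_boundary_evaluation (i j k : ℕ) (M : ℤ) :
    p i j k ((i : ℤ) + j - 1) ((i : ℤ) + j - 1) M =
      (if i = 0 then 1 else 0) * (if j = 0 then 1 else 0) * q ^ (T k) *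
        qbin (M - i - j) k := by
  unfold p
  by_cases hij : i = 0 ∧ j = 0
  · obtain ⟨hi, hj⟩ := hij
    subst hi; subst hj
    simp [T, qbin_zero]
  · have hR : ((if i = 0 then (1:RatFunc ℚ) else 0) * (if j = 0 then 1 else 0)) = 0 := by
      by_cases hi : i = 0 <;> by_cases hj : j = 0 <;> simp_all
    rw [hR, zero_mul, zero_mul]
    apply Finset.sum_eq_zero
    intro s hs
    simp only [Finset.mem_range] at hs
    rcases Nat.eq_zero_or_pos s with h0 | hpos
    · subst h0
      rcases Nat.eq_zero_or_pos j with hj | hj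
      · -- j = 0, so i ≥ 1, first qbin vanishes
        have hi : 1 ≤ i := by omega
        have : qbin ((i : ℤ) + j - 1 - (0:ℕ)) ((i:ℤ) - (0:ℕ)) = 0 := by
          apply qbin_eq_zero <;> omega
        rw [this]; ring
      · have : qbin ((i : ℤ) + j - 1 - i) ((j:ℤ) - (0:ℕ)) = 0 := by
          apply qbin_eq_zero <;> omega
        rw [this]; ring
    · have : qbin ((i : ℤ) + j - 1 - i - j + s) (s:ℤ) = 0 := by
        apply qbin_eq_zero <;> omega
      rw [this]; ring
end
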